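/- Let p = 3 and let (ν_1, ..., ν_h) and (π_1, ..., π_k) be partitions of n with ν_r − ν_{r+1} ≥ 3 + δ_{3 | ν_r} for 1 ≤ r < h and π_r − π_{r+1} ≥ 3 + δ_{3 | π_r} for 1 ≤ r < k. Then β_{ν_1} + ... + β_{ν_h} ⊴ β_{π_1} + ... + β_{π_k} in the dominance order if and only if (ν_1, ..., ν_h) ⊵ (π_1, ..., π_k) in the dominance order. -/

import Mathlib

/-- A partition: weakly decreasing list of positive integers. -/
def IsPartition (l : List ℕ) : Prop :=
  l.Pairwise (· ≥ ·) ∧ ∀ x ∈ l, 0 < x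

/-- A strict partition: strictly decreasing list of positive integers. -/
def StrictPartition (l : List ℕ) : Prop :=
  l.Pairwise (· > ·) ∧ ∀ x ∈ l, 0 < x

/-- `p`-strict: equal consecutive parts are divisible by `p`
(parts indexed with trailing zeros appended). -/
def PStrict (p : ℕ) (l : List ℕ) : Prop :=
  ∀ r, l.getD r 0 = l.getD (r+1) 0 → p ∣ l.getD r 0

/-- `p`-restricted: consecutive differences are at most `p - δ_{p ∣ part}`. -/
def PRestricted (p : ℕ) (l : List ℕ) : Prop :=
  ∀ r, l.getD r 0 - l.getD (r+1) 0 ≤ p - (if p ∣ l.getD r 0 then 1 else 0)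

/-- `RP p n l`: `l` is a `p`-strict `p`-restricted partition of `n`. -/
def RP (p n : ℕ) (l : List ℕ) : Prop :=
  IsPartition l ∧ l.sum = n ∧ PStrict p l ∧ PRestricted p l

/-- The basic spin partition `β_n`. -/
def beta (p n : ℕ) : List ℕ :=
  if n = 0 then []
  else if n % p = 0 then List.replicate (n / p - 1) p ++ [p - 1, 1]
  else List.replicate (n / p) p ++ [n % p]

/-- Number of parts not divisible by `p`. -/
def hp' (p : ℕ) (l : List ℕ) : ℕ :=
  (l.filter (fun x => decide (¬ p ∣ x))).length

/-- Componentwise sum of two partitions (padding with zeros). -/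
def addP (a b : List ℕ) : List ℕ :=
  List.ofFn (fun i : Fin (max a.length b.length) => a.getD i 0 + b.getD i 0)

/-- `β_{l_1} + β_{l_2} + ⋯ + β_{l_h}` (componentwise sum). -/
def sumBeta (p : ℕ) (l : List ℕ) : List ℕ :=
  (l.map (beta p)).foldr addP []

/-- `Dominates a b` means `b ⊴ a`: each partial sum of `b` is at most that of `a`. -/
def Dominates (a b : List ℕ) : Prop :=
  ∀ r, (b.take r).sum ≤ (a.take r).sum

/-- Gap condition: `l_r - l_{r+1} ≥ p + δ_{p ∣ l_r}` for all consecutive parts. -/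
def Gap (p : ℕ) (l : List ℕ) : Prop :=
  ∀ r, r + 1 < l.length →
    l.getD (r+1) 0 + p + (if p ∣ l.getD r 0 then 1 else 0) ≤ l.getD r 0

/-- The residue of a node in column `s ≥ 1`: `min (c-1) (p-c)` where
`1 ≤ c ≤ p` and `s ≡ c (mod p)`. -/
def res (p s : ℕ) : ℕ :=
  min ((s - 1) % p) (p - 1 - (s - 1) % p)

/-- The content of a partition: the multiset of residues of all its nodes. -/
def content (p : ℕ) (l : List ℕ) : Multiset ℕ :=
  (l.map (fun part => ((List.range part).map (fun i => res p (i+1)) : Multiset ℕ))).sum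

/-- The partitions `μ_k` of Table I, where `n = b * p + c` with `0 ≤ c < p`. -/
def tableMu (p b c k : ℕ) : List ℕ :=
  if c = 0 then
    if k = 1 then List.replicate (b-2) p ++ [p-1, p-2, 2, 1]
    else List.replicate (b-1) p ++ [p-k, k]
  else if c = 1 then
    if k = 1 then List.replicate (b-1) p ++ [p-2, 2, 1]
    else List.replicate (b-1) p ++ [p+1-k, k]
  else if c ≤ p - 2 then
    if k ≤ (c+1)/2 - 1 then List.replicate b p ++ [c/2 + k, (c+1)/2 - k]
    else if k = (c+1)/2 then List.replicate (b-1) p ++ [p-1, c, 1]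
    else List.replicate (b-1) p ++ [p + (c+1)/2 - k, c/2 + k]
  else
    if k ≤ (p-1)/2 - 1 then List.replicate b p ++ [(p-1)/2 + k, (p-1)/2 - k]
    else List.replicate (b-1) p ++ [p-1, p-2, 2]


namespace S5


/-- number of parts ≥ y -/
def cnt (l : List ℕ) (y : ℕ) : ℕ := l.countP (fun m => decide (y ≤ m))

/-- number of parts equal to 3r -/
def ecP (l : List ℕ) (r : ℕ) : ℕ := l.countP (fun m => decide (m = 3*r))

def Msum (l : List ℕ) (x : ℕ) : ℕ := (l.map (fun m => min x m)).sum

def Tsum (l : List ℕ) (x : ℕ) : ℕ := (l.map (fun m => m - x)).sum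

lemma Msum_zero (l : List ℕ) : Msum l 0 = 0 := by
  induction l with
  | nil => rfl
  | cons a l ih => simpa [Msum] using ih

lemma Msum_at (l : List ℕ) (y z : ℕ) (h : z = y + 1) :
    Msum l z = Msum l y + cnt l z := by
  subst h
  induction l with
  | nil => rfl
  | cons a l ih =>
    simp only [Msum, cnt, List.map_cons, List.sum_cons, List.countP_cons] at *
    split_ifs with hb
    · simp only [decide_eq_true_eq] at hb; omega
    · simp only [decide_eq_true_eq] at hb; omega

lemma cnt_anti (l : List ℕ) (y z : ℕ) (h : y ≤ z) : cnt l z ≤ cnt l y := by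
  apply List.countP_mono_left
  intro x _ hx
  simp only [decide_eq_true_eq] at *
  omega

lemma cnt_split_ec (l : List ℕ) (r u v : ℕ) (hu : u = 3*r) (hv : v = 3*r+1) :
    cnt l u = cnt l v + ecP l r := by
  subst hu hv
  induction l with
  | nil => rfl
  | cons a l ih =>
    simp only [cnt, ecP, List.countP_cons] at *
    split_ifs <;> simp_all [decide_eq_true_eq] <;> omega

/-- parts are ≥ 0 trivially; with positivity cnt at 0 and 1 agree -/
lemma cnt_zero_one (l : List ℕ) (hpos : ∀ x ∈ l, 0 < x) : cnt l 0 = cnt l 1 := by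
  induction l with
  | nil => rfl
  | cons a l ih =>
    simp only [cnt, List.countP_cons] at *
    have ha := hpos a (by simp)
    have : ∀ x ∈ l, 0 < x := fun x hx => hpos x (by simp [hx])
    split_ifs <;> simp_all [decide_eq_true_eq] <;> omega

lemma ecP_zero (l : List ℕ) (hpos : ∀ x ∈ l, 0 < x) : ecP l 0 = 0 := by
  simp only [ecP]
  rw [List.countP_eq_zero]
  intro x hx
  have := hpos x hx
  simp only [decide_eq_true_eq]
  omega

/-- the pairwise relation derived from Gap -/
def R (x y : ℕ) : Prop := y + 3 ≤ x ∧ (3 ∣ x → y + 4 ≤ x)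

lemma gap_pairwise (l : List ℕ) (hg : Gap 3 l) : l.Pairwise R := by
  haveI : IsTrans ℕ R := ⟨fun a b c hab hbc => by
    obtain ⟨h1, h2⟩ := hab; obtain ⟨h3, h4⟩ := hbc
    exact ⟨by omega, fun _ => by omega⟩⟩
  rw [← List.isChain_iff_pairwise]
  rw [List.isChain_iff_getElem]
  intro i hi
  have h := hg i (by omega)
  have h1 : l.getD i 0 = l.get ⟨i, by omega⟩ := by
    rw [List.getD_eq_getElem l 0 (by omega)]; simp
  have h2 : l.getD (i+1) 0 = l.get ⟨i+1, by omega⟩ := by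
    rw [List.getD_eq_getElem l 0 (by omega)]; simp
  simp only [List.get_eq_getElem] at h1 h2
  refine ⟨?_, ?_⟩
  · split_ifs at h <;> omega
  · intro hd
    have hd' : 3 ∣ l.getD i 0 := by rw [h1]; exact hd
    have hv : (if 3 ∣ l.getD i 0 then 1 else 0) = 1 := if_pos hd'
    omega

lemma countP_le_one_of_pairwise (l : List ℕ) (P : ℕ → Bool)
    (hl : l.Pairwise R) (hR : ∀ x y, R x y → ¬(P x = true ∧ P y = true)) :
    l.countP P ≤ 1 := by
  induction l with
  | nil => simp
  | cons a l ih =>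
    rw [List.pairwise_cons] at hl
    rw [List.countP_cons]
    split_ifs with ha
    · have : l.countP P = 0 := by
        rw [List.countP_eq_zero]
        intro x hx hPx
        exact hR a x (hl.1 x hx) ⟨ha, hPx⟩
      omega
    · have := ih hl.2
      omega

lemma cnt_interval (l : List ℕ) (a b : ℕ) (h : a ≤ b) :
    cnt l a = cnt l (b+1) + l.countP (fun m => decide (a ≤ m ∧ m ≤ b)) := by
  induction l with
  | nil => rfl
  | cons c l ih =>
    simp only [cnt, List.countP_cons] at *
    split_ifs <;> simp_all [decide_eq_true_eq] <;> omega

lemma cnt_F2 (l : List ℕ) (hl : l.Pairwise R) (a z : ℕ) (hz : z = a + 3) :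
    cnt l a ≤ cnt l z + 1 := by
  subst hz
  have h := cnt_interval l a (a+2) (by omega)
  have h2 : l.countP (fun m => decide (a ≤ m ∧ m ≤ a+2)) ≤ 1 := by
    apply countP_le_one_of_pairwise l _ hl
    intro x y hxy
    simp only [decide_eq_true_eq]
    rintro ⟨⟨hx1, hx2⟩, hy1, hy2⟩
    have := hxy.1
    omega
  have h3 : a + 2 + 1 = a + 3 := by omega
  rw [h3] at h
  omega

lemma cnt_F3 (l : List ℕ) (hl : l.Pairwise R) (a z : ℕ) (hz : z = a + 4)
    (hd : 3 ∣ (a + 3)) : cnt l a ≤ cnt l z + 1 := by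
  subst hz
  have h := cnt_interval l a (a+3) (by omega)
  have h2 : l.countP (fun m => decide (a ≤ m ∧ m ≤ a+3)) ≤ 1 := by
    apply countP_le_one_of_pairwise l _ hl
    intro x y hxy
    simp only [decide_eq_true_eq]
    rintro ⟨⟨hx1, hx2⟩, hy1, hy2⟩
    obtain ⟨h1, hdiv⟩ := hxy
    have hx : x = a + 3 := by omega
    have := hdiv (hx ▸ hd)
    omega
  have h3 : a + 3 + 1 = a + 4 := by omega
  rw [h3] at h
  omega




lemma take_sum_getD (l : List ℕ) (r : ℕ) :
    (l.take r).sum = ∑ i ∈ Finset.range r, l.getD i 0 := by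
  induction l generalizing r with
  | nil => simp [List.getD]
  | cons a l ih =>
    cases r with
    | zero => simp
    | succ r =>
      rw [Finset.sum_range_succ']
      simp only [List.take_succ_cons, List.sum_cons, List.getD_cons_succ, List.getD_cons_zero]
      rw [ih r]
      omega

lemma getD_addP (a b : List ℕ) (i : ℕ) :
    (addP a b).getD i 0 = a.getD i 0 + b.getD i 0 := by
  by_cases hi : i < max a.length b.length
  · have hlen : (addP a b).length = max a.length b.length := by
      simp [addP]
    rw [List.getD_eq_getElem (addP a b) 0 (by omega)]
    simp only [addP]
    rw [List.getElem_ofFn]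
  · rw [List.getD_eq_default _ _ (by simp [addP]; omega),
      List.getD_eq_default _ _ (by omega), List.getD_eq_default _ _ (by omega)]

lemma addP_take_sum (a b : List ℕ) (r : ℕ) :
    ((addP a b).take r).sum = (a.take r).sum + (b.take r).sum := by
  rw [take_sum_getD, take_sum_getD, take_sum_getD, ← Finset.sum_add_distrib]
  exact Finset.sum_congr rfl (fun i _ => getD_addP a b i)

lemma tail2_take (k : ℕ) : (([2, 1] : List ℕ).take k).sum =
    if k = 0 then 0 else if k = 1 then 2 else 3 := by
  match k with
  | 0 => rfl
  | 1 => rfl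
  | (n+2) => simp [List.take_succ_cons]

lemma tail1_take (c k : ℕ) : (([c] : List ℕ).take k).sum =
    if k = 0 then 0 else c := by
  match k with
  | 0 => rfl
  | (n+1) => simp [List.take_succ_cons]

lemma beta_take (m r : ℕ) (hm : 0 < m) :
    ((beta 3 m).take r).sum + (if m = 3*r then 1 else 0) = min (3*r) m := by
  by_cases h3 : m % 3 = 0
  · have hb : 1 ≤ m / 3 := by omega
    simp only [beta, if_neg (by omega : ¬ m = 0), if_pos h3]
    rw [List.take_append, List.sum_append, List.take_replicate,
      List.sum_replicate, List.length_replicate, smul_eq_mul]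
    rw [tail2_take]
    have hm3 : m = 3 * (m / 3) := by omega
    rw [Nat.min_def, Nat.min_def]
    split_ifs <;> omega
  · simp only [beta, if_neg (by omega : ¬ m = 0), if_neg h3]
    rw [List.take_append, List.sum_append, List.take_replicate,
      List.sum_replicate, List.length_replicate, smul_eq_mul]
    rw [tail1_take]
    have hm3 : m = 3 * (m / 3) + m % 3 := by omega
    have h1 : m % 3 ≠ 0 := h3
    rw [Nat.min_def, Nat.min_def]
    split_ifs <;> omega

lemma sumBeta_take (l : List ℕ) (r : ℕ) (hpos : ∀ x ∈ l, 0 < x) :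
    ((sumBeta 3 l).take r).sum + ecP l r = Msum l (3*r) := by
  induction l with
  | nil => simp [sumBeta, ecP, Msum]
  | cons m l ih =>
    have hcons : sumBeta 3 (m :: l) = addP (beta 3 m) (sumBeta 3 l) := rfl
    rw [hcons, addP_take_sum]
    have hb := beta_take m r (hpos m (by simp))
    have hih := ih (fun x hx => hpos x (by simp [hx]))
    simp only [ecP, Msum, List.countP_cons, List.map_cons, List.sum_cons,
      decide_eq_true_eq] at *
    split_ifs at hb ⊢ <;> omega





lemma M_T_sum (l : List ℕ) (x : ℕ) : Msum l x + Tsum l x = l.sum := by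
  induction l with
  | nil => rfl
  | cons a l ih =>
    simp only [Msum, Tsum, List.map_cons, List.sum_cons] at *
    have : min x a + (a - x) = a := by rw [Nat.min_def]; split_ifs <;> omega
    omega

/-- C1 -/
lemma take_le_Tsum (l : List ℕ) (x t : ℕ) :
    (l.take t).sum ≤ Tsum l x + t * x := by
  induction l generalizing t with
  | nil => simp [Tsum]
  | cons a l ih =>
    cases t with
    | zero => simp
    | succ t =>
      simp only [List.take_succ_cons, List.sum_cons, Tsum, List.map_cons] at *
      have := ih t
      have : a ≤ (a - x) + x := by omega
      calc a + (l.take t).sum ≤ a + ((l.map (fun m => m - x)).sum + t * x) := by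
            have := ih t; omega
        _ ≤ (a - x) + x + ((l.map (fun m => m - x)).sum + t * x) := by omega
        _ = (a - x) + (l.map (fun m => m - x)).sum + (t+1) * x := by ring
  
/-- C2' -/
lemma exists_take_Tsum (l : List ℕ) (x : ℕ) (hs : l.Pairwise (· ≥ ·)) :
    ∃ t, Tsum l x + t * x ≤ (l.take t).sum := by
  induction l with
  | nil => exact ⟨0, by simp [Tsum]⟩
  | cons a l ih =>
    rw [List.pairwise_cons] at hs
    by_cases hax : a ≤ x
    · refine ⟨0, ?_⟩
      have hz : Tsum (a :: l) x = 0 := by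
        simp only [Tsum]
        apply List.sum_eq_zero
        intro y hy
        simp only [List.map_cons, List.mem_cons, List.mem_map] at hy
        rcases hy with h | ⟨m, hm, hmy⟩
        · omega
        · have := hs.1 m hm; omega
      rw [hz]; simp
    · obtain ⟨t, ht⟩ := ih hs.2
      refine ⟨t + 1, ?_⟩
      simp only [Tsum, List.map_cons, List.sum_cons, List.take_succ_cons] at *
      have : (a - x) + x = a := by omega
      calc (a - x) + (l.map (fun m => m - x)).sum + (t+1) * x
          = ((a - x) + x) + ((l.map (fun m => m - x)).sum + t * x) := by ring
        _ ≤ a + (l.take t).sum := by omega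

/-- D2 -/
lemma Tsum_getD (l : List ℕ) (s : ℕ) (hs : l.Pairwise (· ≥ ·)) (hlen : s < l.length) :
    Tsum l (l.getD s 0) + s * l.getD s 0 ≤ (l.take s).sum := by
  induction l generalizing s with
  | nil => simp at hlen
  | cons a l ih =>
    rw [List.pairwise_cons] at hs
    cases s with
    | zero =>
      simp only [List.getD_cons_zero, List.take_zero, List.sum_nil, Nat.zero_mul, Nat.add_zero]
      have hz : Tsum (a :: l) a = 0 := by
        simp only [Tsum]
        apply List.sum_eq_zero
        intro y hy
        simp only [List.map_cons, List.mem_cons, List.mem_map] at hy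
        rcases hy with h | ⟨m, hm, hmy⟩
        · omega
        · have := hs.1 m hm; omega
      omega
    | succ s =>
      simp only [List.getD_cons_succ, List.take_succ_cons, List.sum_cons] at *
      have hlen' : s < l.length := by simpa using hlen
      have hx : l.getD s 0 ≤ a := by
        have hmem : l.getD s 0 ∈ l := by
          rw [List.getD_eq_getElem l 0 hlen']
          exact List.getElem_mem hlen'
        exact hs.1 _ hmem
      have hih := ih s hs.2 hlen'
      simp only [Tsum, List.map_cons, List.sum_cons] at *
      have : (a - l.getD s 0) + l.getD s 0 = a := by omega
      calc (a - l.getD s 0) + (l.map (fun m => m - l.getD s 0)).sum + (s+1) * l.getD s 0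
          = ((a - l.getD s 0) + l.getD s 0)
            + ((l.map (fun m => m - l.getD s 0)).sum + s * l.getD s 0) := by ring
        _ ≤ a + (l.take s).sum := by omega

lemma dom_to_M (ν π : List ℕ) (hsum : ν.sum = π.sum) (hπ : π.Pairwise (· ≥ ·))
    (hdom : Dominates ν π) : ∀ x, Msum ν x ≤ Msum π x := by
  intro x
  obtain ⟨t, ht⟩ := exists_take_Tsum π x hπ
  have h1 : Tsum π x + t * x ≤ (π.take t).sum := ht
  have h2 : (π.take t).sum ≤ (ν.take t).sum := hdom t
  have h3 : (ν.take t).sum ≤ Tsum ν x + t * x := take_le_Tsum ν x t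
  have h4 := M_T_sum ν x
  have h5 := M_T_sum π x
  omega

lemma M_to_dom (ν π : List ℕ) (hsum : ν.sum = π.sum) (hν : ν.Pairwise (· ≥ ·))
    (hM : ∀ x, Msum ν x ≤ Msum π x) : Dominates ν π := by
  intro s
  by_cases hlen : s < ν.length
  · set x := ν.getD s 0 with hx
    have h1 : (π.take s).sum ≤ Tsum π x + s * x := take_le_Tsum π x s
    have h2 : Tsum ν x + s * x ≤ (ν.take s).sum := Tsum_getD ν s hν hlen
    have h3 := M_T_sum ν x
    have h4 := M_T_sum π x
    have h5 := hM x
    omega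
  · have h1 : ν.take s = ν := List.take_of_length_le (by omega)
    have h2 : (π.take s).sum ≤ π.sum := by
      conv_rhs => rw [← List.take_append_drop s π]
      rw [List.sum_append]
      omega
    rw [h1]
    omega


lemma key1 (ν π : List ℕ) (hRν : ν.Pairwise R) (hRπ : π.Pairwise R)
    (H : ∀ r, Msum ν (3*r) + ecP π r ≤ Msum π (3*r) + ecP ν r) (q : ℕ) :
    Msum ν (3*q+3) ≤ Msum π (3*q+3) := by
  have hq1 := H q
  have hq2 := H (q+1)
  rw [show 3*(q+1) = 3*q+3 by ring] at hq2
  have hq3 := H (q+2)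
  rw [show 3*(q+2) = 3*q+6 by ring] at hq3
  have νc0 : Msum ν (3*q+1) = Msum ν (3*q) + cnt ν (3*q+1) := Msum_at ν (3*q) (3*q+1) (by omega)
  have νc1 : Msum ν (3*q+2) = Msum ν (3*q+1) + cnt ν (3*q+2) := Msum_at ν (3*q+1) (3*q+2) (by omega)
  have νc2 : Msum ν (3*q+3) = Msum ν (3*q+2) + cnt ν (3*q+3) := Msum_at ν (3*q+2) (3*q+3) (by omega)
  have νc3 : Msum ν (3*q+4) = Msum ν (3*q+3) + cnt ν (3*q+4) := Msum_at ν (3*q+3) (3*q+4) (by omega)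
  have νc4 : Msum ν (3*q+5) = Msum ν (3*q+4) + cnt ν (3*q+5) := Msum_at ν (3*q+4) (3*q+5) (by omega)
  have νc5 : Msum ν (3*q+6) = Msum ν (3*q+5) + cnt ν (3*q+6) := Msum_at ν (3*q+5) (3*q+6) (by omega)
  have νa1 : cnt ν (3*q+2) ≤ cnt ν (3*q+1) := cnt_anti ν (3*q+1) (3*q+2) (by omega)
  have νa2 : cnt ν (3*q+3) ≤ cnt ν (3*q+2) := cnt_anti ν (3*q+2) (3*q+3) (by omega)
  have νa3 : cnt ν (3*q+4) ≤ cnt ν (3*q+3) := cnt_anti ν (3*q+3) (3*q+4) (by omega)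
  have νa4 : cnt ν (3*q+5) ≤ cnt ν (3*q+4) := cnt_anti ν (3*q+4) (3*q+5) (by omega)
  have νa5 : cnt ν (3*q+6) ≤ cnt ν (3*q+5) := cnt_anti ν (3*q+5) (3*q+6) (by omega)
  have νa6 : cnt ν (3*q+7) ≤ cnt ν (3*q+6) := cnt_anti ν (3*q+6) (3*q+7) (by omega)
  have νe0 : cnt ν (3*q) = cnt ν (3*q+1) + ecP ν q := cnt_split_ec ν q (3*q) (3*q+1) (by omega) (by omega)
  have νe1 : cnt ν (3*q+3) = cnt ν (3*q+4) + ecP ν (q+1) := cnt_split_ec ν (q+1) (3*q+3) (3*q+4) (by omega) (by omega)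
  have νe2 : cnt ν (3*q+6) = cnt ν (3*q+7) + ecP ν (q+2) := cnt_split_ec ν (q+2) (3*q+6) (3*q+7) (by omega) (by omega)
  have νf0 : cnt ν (3*q) ≤ cnt ν (3*q+4) + 1 := cnt_F3 ν hRν (3*q) (3*q+4) (by omega) ⟨q+1, by ring⟩
  have νf1 : cnt ν (3*q+3) ≤ cnt ν (3*q+7) + 1 := cnt_F3 ν hRν (3*q+3) (3*q+7) (by omega) ⟨q+2, by ring⟩
  have πc0 : Msum π (3*q+1) = Msum π (3*q) + cnt π (3*q+1) := Msum_at π (3*q) (3*q+1) (by omega)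
  have πc1 : Msum π (3*q+2) = Msum π (3*q+1) + cnt π (3*q+2) := Msum_at π (3*q+1) (3*q+2) (by omega)
  have πc2 : Msum π (3*q+3) = Msum π (3*q+2) + cnt π (3*q+3) := Msum_at π (3*q+2) (3*q+3) (by omega)
  have πc3 : Msum π (3*q+4) = Msum π (3*q+3) + cnt π (3*q+4) := Msum_at π (3*q+3) (3*q+4) (by omega)
  have πc4 : Msum π (3*q+5) = Msum π (3*q+4) + cnt π (3*q+5) := Msum_at π (3*q+4) (3*q+5) (by omega)
  have πc5 : Msum π (3*q+6) = Msum π (3*q+5) + cnt π (3*q+6) := Msum_at π (3*q+5) (3*q+6) (by omega)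
  have πa1 : cnt π (3*q+2) ≤ cnt π (3*q+1) := cnt_anti π (3*q+1) (3*q+2) (by omega)
  have πa2 : cnt π (3*q+3) ≤ cnt π (3*q+2) := cnt_anti π (3*q+2) (3*q+3) (by omega)
  have πa3 : cnt π (3*q+4) ≤ cnt π (3*q+3) := cnt_anti π (3*q+3) (3*q+4) (by omega)
  have πa4 : cnt π (3*q+5) ≤ cnt π (3*q+4) := cnt_anti π (3*q+4) (3*q+5) (by omega)
  have πa5 : cnt π (3*q+6) ≤ cnt π (3*q+5) := cnt_anti π (3*q+5) (3*q+6) (by omega)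
  have πa6 : cnt π (3*q+7) ≤ cnt π (3*q+6) := cnt_anti π (3*q+6) (3*q+7) (by omega)
  have πe0 : cnt π (3*q) = cnt π (3*q+1) + ecP π q := cnt_split_ec π q (3*q) (3*q+1) (by omega) (by omega)
  have πe1 : cnt π (3*q+3) = cnt π (3*q+4) + ecP π (q+1) := cnt_split_ec π (q+1) (3*q+3) (3*q+4) (by omega) (by omega)
  have πe2 : cnt π (3*q+6) = cnt π (3*q+7) + ecP π (q+2) := cnt_split_ec π (q+2) (3*q+6) (3*q+7) (by omega) (by omega)
  omega

lemma keyW (ν π : List ℕ) (hRν : ν.Pairwise R) (hRπ : π.Pairwise R)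
    (H : ∀ r, Msum ν (3*r) + ecP π r ≤ Msum π (3*r) + ecP ν r) (t : ℕ)
    (hD0 : Msum ν (3*t) ≤ Msum π (3*t)) :
    Msum ν (3*t+1) ≤ Msum π (3*t+1) ∧ Msum ν (3*t+2) ≤ Msum π (3*t+2) := by
  have hq1 := H t
  have hq2 := H (t+1)
  rw [show 3*(t+1) = 3*t+3 by ring] at hq2
  have νc0 : Msum ν (3*t+1) = Msum ν (3*t) + cnt ν (3*t+1) := Msum_at ν (3*t) (3*t+1) (by omega)
  have νc1 : Msum ν (3*t+2) = Msum ν (3*t+1) + cnt ν (3*t+2) := Msum_at ν (3*t+1) (3*t+2) (by omega)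
  have νc2 : Msum ν (3*t+3) = Msum ν (3*t+2) + cnt ν (3*t+3) := Msum_at ν (3*t+2) (3*t+3) (by omega)
  have νa0 : cnt ν (3*t+1) ≤ cnt ν (3*t) := cnt_anti ν (3*t) (3*t+1) (by omega)
  have νa1 : cnt ν (3*t+2) ≤ cnt ν (3*t+1) := cnt_anti ν (3*t+1) (3*t+2) (by omega)
  have νa2 : cnt ν (3*t+3) ≤ cnt ν (3*t+2) := cnt_anti ν (3*t+2) (3*t+3) (by omega)
  have νa3 : cnt ν (3*t+4) ≤ cnt ν (3*t+3) := cnt_anti ν (3*t+3) (3*t+4) (by omega)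
  have νf0 : cnt ν (3*t) ≤ cnt ν (3*t+3) + 1 := cnt_F2 ν hRν (3*t) (3*t+3) (by omega)
  have νf1 : cnt ν (3*t+1) ≤ cnt ν (3*t+4) + 1 := cnt_F2 ν hRν (3*t+1) (3*t+4) (by omega)
  have νf2 : cnt ν (3*t) ≤ cnt ν (3*t+4) + 1 := cnt_F3 ν hRν (3*t) (3*t+4) (by omega) ⟨t+1, by ring⟩
  have νe0 : cnt ν (3*t) = cnt ν (3*t+1) + ecP ν t := cnt_split_ec ν t (3*t) (3*t+1) (by omega) (by omega)
  have νe1 : cnt ν (3*t+3) = cnt ν (3*t+4) + ecP ν (t+1) := cnt_split_ec ν (t+1) (3*t+3) (3*t+4) (by omega) (by omega)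
  have πc0 : Msum π (3*t+1) = Msum π (3*t) + cnt π (3*t+1) := Msum_at π (3*t) (3*t+1) (by omega)
  have πc1 : Msum π (3*t+2) = Msum π (3*t+1) + cnt π (3*t+2) := Msum_at π (3*t+1) (3*t+2) (by omega)
  have πc2 : Msum π (3*t+3) = Msum π (3*t+2) + cnt π (3*t+3) := Msum_at π (3*t+2) (3*t+3) (by omega)
  have πa0 : cnt π (3*t+1) ≤ cnt π (3*t) := cnt_anti π (3*t) (3*t+1) (by omega)
  have πa1 : cnt π (3*t+2) ≤ cnt π (3*t+1) := cnt_anti π (3*t+1) (3*t+2) (by omega)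
  have πa2 : cnt π (3*t+3) ≤ cnt π (3*t+2) := cnt_anti π (3*t+2) (3*t+3) (by omega)
  have πa3 : cnt π (3*t+4) ≤ cnt π (3*t+3) := cnt_anti π (3*t+3) (3*t+4) (by omega)
  have πf0 : cnt π (3*t) ≤ cnt π (3*t+3) + 1 := cnt_F2 π hRπ (3*t) (3*t+3) (by omega)
  have πf1 : cnt π (3*t+1) ≤ cnt π (3*t+4) + 1 := cnt_F2 π hRπ (3*t+1) (3*t+4) (by omega)
  have πf2 : cnt π (3*t) ≤ cnt π (3*t+4) + 1 := cnt_F3 π hRπ (3*t) (3*t+4) (by omega) ⟨t+1, by ring⟩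
  have πe0 : cnt π (3*t) = cnt π (3*t+1) + ecP π t := cnt_split_ec π t (3*t) (3*t+1) (by omega) (by omega)
  have πe1 : cnt π (3*t+3) = cnt π (3*t+4) + ecP π (t+1) := cnt_split_ec π (t+1) (3*t+3) (3*t+4) (by omega) (by omega)
  exact ⟨by omega, by omega⟩

lemma crux_forward (ν π : List ℕ) (hRν : ν.Pairwise R) (hRπ : π.Pairwise R)
    (hνpos : ∀ x ∈ ν, 0 < x) (hπpos : ∀ x ∈ π, 0 < x)
    (H : ∀ r, Msum ν (3*r) + ecP π r ≤ Msum π (3*r) + ecP ν r) :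
    ∀ x, Msum ν x ≤ Msum π x := by
  have hmult : ∀ t, Msum ν (3*t) ≤ Msum π (3*t) := by
    intro t
    rcases t with _ | q
    · rw [show 3*0 = 0 by norm_num, Msum_zero, Msum_zero]
    · rw [show 3*(q+1) = 3*q+3 by ring]
      exact key1 ν π hRν hRπ H q
  intro x
  obtain ⟨t, ht⟩ : ∃ t, x = 3*t ∨ x = 3*t+1 ∨ x = 3*t+2 := ⟨x/3, by omega⟩
  have hk := keyW ν π hRν hRπ H t (hmult t)
  rcases ht with h | h | h <;> rw [h]
  · exact hmult t
  · exact hk.1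
  · exact hk.2

lemma crux_backward (ν π : List ℕ) (hRν : ν.Pairwise R) (hRπ : π.Pairwise R)
    (hνpos : ∀ x ∈ ν, 0 < x) (hπpos : ∀ x ∈ π, 0 < x)
    (hM : ∀ x, Msum ν x ≤ Msum π x) :
    ∀ r, Msum ν (3*r) + ecP π r ≤ Msum π (3*r) + ecP ν r := by
  intro r
  rcases r with _ | s
  · have z1 : Msum ν (3*0) = 0 := Msum_zero ν
    have z2 : Msum π (3*0) = 0 := Msum_zero π
    have z3 : ecP ν 0 = 0 := ecP_zero ν hνpos
    have z4 : ecP π 0 = 0 := ecP_zero π hπpos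
    omega
  · rw [show 3*(s+1) = 3*s+3 by ring]
    have g1 := hM (3*s+2)
    have g2 := hM (3*s+3)
    have g3 := hM (3*s+4)
    have cν1 : Msum ν (3*s+3) = Msum ν (3*s+2) + cnt ν (3*s+3) :=
      Msum_at ν (3*s+2) (3*s+3) (by omega)
    have cν2 : Msum ν (3*s+4) = Msum ν (3*s+3) + cnt ν (3*s+4) :=
      Msum_at ν (3*s+3) (3*s+4) (by omega)
    have cπ1 : Msum π (3*s+3) = Msum π (3*s+2) + cnt π (3*s+3) :=
      Msum_at π (3*s+2) (3*s+3) (by omega)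
    have cπ2 : Msum π (3*s+4) = Msum π (3*s+3) + cnt π (3*s+4) :=
      Msum_at π (3*s+3) (3*s+4) (by omega)
    have eν : cnt ν (3*s+3) = cnt ν (3*s+4) + ecP ν (s+1) :=
      cnt_split_ec ν (s+1) (3*s+3) (3*s+4) (by omega) (by omega)
    have eπ : cnt π (3*s+3) = cnt π (3*s+4) + ecP π (s+1) :=
      cnt_split_ec π (s+1) (3*s+3) (3*s+4) (by omega) (by omega)
    have f2ν : cnt ν (3*s+3) ≤ cnt ν (3*s+6) + 1 := cnt_F2 ν hRν (3*s+3) (3*s+6) (by omega)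
    have f2π : cnt π (3*s+3) ≤ cnt π (3*s+6) + 1 := cnt_F2 π hRπ (3*s+3) (3*s+6) (by omega)
    have aν1 : cnt ν (3*s+6) ≤ cnt ν (3*s+4) := cnt_anti ν (3*s+4) (3*s+6) (by omega)
    have aπ1 : cnt π (3*s+6) ≤ cnt π (3*s+4) := cnt_anti π (3*s+4) (3*s+6) (by omega)
    omega


end S5

/-- for `p = 3` and partitions `ν, π` of `n` with gaps
`≥ 3 + δ_{3 ∣ ·}`, one has `β_{ν_1} + ⋯ + β_{ν_h} ⊴ β_{π_1} + ⋯ + β_{π_k}`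
iff `ν ⊵ π` in the dominance order. -/
theorem stmt5 (n : ℕ) (ν π : List ℕ)
    (hν : IsPartition ν) (hνs : ν.sum = n) (hνg : Gap 3 ν)
    (hπ : IsPartition π) (hπs : π.sum = n) (hπg : Gap 3 π) :
    Dominates (sumBeta 3 π) (sumBeta 3 ν) ↔ Dominates ν π := by
  have hRν := S5.gap_pairwise ν hνg
  have hRπ := S5.gap_pairwise π hπg
  have bν : ∀ r, ((sumBeta 3 ν).take r).sum + S5.ecP ν r = S5.Msum ν (3*r) :=
    fun r => S5.sumBeta_take ν r hν.2
  have bπ : ∀ r, ((sumBeta 3 π).take r).sum + S5.ecP π r = S5.Msum π (3*r) :=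
    fun r => S5.sumBeta_take π r hπ.2
  have hsum : ν.sum = π.sum := by omega
  constructor
  · intro hD
    have hyp : ∀ r, S5.Msum ν (3*r) + S5.ecP π r ≤ S5.Msum π (3*r) + S5.ecP ν r := by
      intro r
      have h1 := hD r
      have h2 := bν r
      have h3 := bπ r
      omega
    exact S5.M_to_dom ν π hsum hν.1
      (S5.crux_forward ν π hRν hRπ hν.2 hπ.2 hyp)
  · intro hd r
    have hM := S5.dom_to_M ν π hsum hπ.1 hd
    have h := S5.crux_backward ν π hRν hRπ hν.2 hπ.2 hM r
    have h2 := bν r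
    have h3 := bπ r
    omega
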